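/- Define t_n^{(r)} = r · ((r-1)n)! / ((n-1)! · ((r-2)n + 2)!) for integers n ≥ 1, r ≥ 3. Then t_n^{(r)} ≤ (rn)^(n-1) / n! for all such n, r. -/

import Mathlib

lemma fact_add_le_pow (a m c : ℕ) (h : a + m ≤ c) :
    Nat.factorial (a + m) ≤ Nat.factorial a * c ^ m := by
  induction m with
  | zero => simp
  | succ k ih =>
      have hk : a + k ≤ c := by omega
      calc Nat.factorial (a + (k + 1)) = (a + k + 1) * Nat.factorial (a + k) := by
            rw [show a + (k+1) = (a+k)+1 by ring, Nat.factorial_succ]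
        _ ≤ c * (Nat.factorial a * c ^ k) := by
            exact Nat.mul_le_mul (by omega) (ih hk)
        _ = Nat.factorial a * c ^ (k + 1) := by ring

theorem stmt_4 (n r : ℕ) (hn : 1 ≤ n) (hr : 3 ≤ r) :
    (r : ℝ) * (Nat.factorial ((r - 1) * n) : ℝ) /
        ((Nat.factorial (n - 1) : ℝ) * (Nat.factorial ((r - 2) * n + 2) : ℝ))
      ≤ ((r * n : ℕ) : ℝ) ^ (n - 1) / (Nat.factorial n : ℝ) := by
  have key : r * Nat.factorial ((r - 1) * n) * Nat.factorial n ≤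
      (r * n) ^ (n - 1) * (Nat.factorial (n - 1) * Nat.factorial ((r - 2) * n + 2)) := by
    have hfn : Nat.factorial n = n * Nat.factorial (n - 1) := by
      rw [← Nat.mul_factorial_pred (show n ≠ 0 by omega)]
    rw [hfn]
    have core : r * Nat.factorial ((r - 1) * n) * n ≤
        (r * n) ^ (n - 1) * Nat.factorial ((r - 2) * n + 2) := by
      rcases Nat.lt_or_ge n 2 with h2 | h2
      · interval_cases n
        have : (r - 2) * 1 + 2 = r := by omega
        rw [this]
        have : (r - 1) * 1 = r - 1 := by ring
        rw [this]
        simp [← Nat.mul_factorial_pred (show r ≠ 0 by omega)]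
      · obtain ⟨m, rfl⟩ : ∃ m, n = m + 2 := ⟨n - 2, by omega⟩
        obtain ⟨s, rfl⟩ : ∃ s, r = s + 3 := ⟨r - 3, by omega⟩
        simp only [show s + 3 - 2 = s + 1 from rfl, show s + 3 - 1 = s + 2 from rfl,
          show m + 2 - 2 = m from rfl, show m + 2 - 1 = m + 1 from rfl]
        have hb : (s + 1) * (m + 2) + 2 + m = (s + 2) * (m + 2) := by ring
        have h1 := fact_add_le_pow ((s + 1) * (m + 2) + 2) m ((s + 3) * (m + 2))
          (by rw [hb]; exact Nat.mul_le_mul_right _ (by omega))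
        rw [hb] at h1
        calc (s + 3) * Nat.factorial ((s + 2) * (m + 2)) * (m + 2)
            ≤ (s + 3) * (Nat.factorial ((s + 1) * (m + 2) + 2) *
                ((s + 3) * (m + 2)) ^ m) * (m + 2) :=
              Nat.mul_le_mul_right _ (Nat.mul_le_mul_left _ h1)
          _ = ((s + 3) * (m + 2)) ^ (m + 1) * Nat.factorial ((s + 1) * (m + 2) + 2) := by
              ring
    calc r * Nat.factorial ((r - 1) * n) * (n * Nat.factorial (n - 1))
        = (r * Nat.factorial ((r - 1) * n) * n) * Nat.factorial (n - 1) := by ring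
      _ ≤ ((r * n) ^ (n - 1) * Nat.factorial ((r - 2) * n + 2)) * Nat.factorial (n - 1) :=
          Nat.mul_le_mul_right _ core
      _ = (r * n) ^ (n - 1) * (Nat.factorial (n - 1) * Nat.factorial ((r - 2) * n + 2)) := by
          ring
  rw [div_le_div_iff₀ (by positivity) (by positivity)]
  have := (Nat.cast_le (α := ℝ)).2 key
  push_cast at this ⊢
  linarith
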